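/- Let u, v, ξ ∈ ℂⁿ (n ≥ 2), α ≥ 0, and 1 ≤ p ≤ ∞. If v has pairwise distinct coordinates and |uᵢ - ξᵢ| ≤ α |vᵢ - ξᵢ| for all i, then for all i ≠ j, |uⱼ - vᵢ| ≥ (1 - (1 + α) ‖(v - ξ)/d(v)‖_p) |vᵢ - vⱼ|. -/

import Mathlib

open scoped ENNReal

noncomputable def pnorm (p : ℝ≥0∞) {n : ℕ} (w : Fin n → ℝ) : ℝ :=
  ‖(WithLp.equiv p (Fin n → ℝ)).symm w‖

noncomputable def dmin {n : ℕ} (v : Fin n → ℂ) (i : Fin n) : ℝ :=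
  ⨅ j : {j : Fin n // j ≠ i}, ‖v i - v j.1‖

lemma coord_le_pnorm {n : ℕ} (p : ℝ≥0∞) (hp : 1 ≤ p) (w : Fin n → ℝ) (k : Fin n) :
    |w k| ≤ pnorm p w := by
  unfold pnorm
  by_cases hpt : p = ⊤
  · subst hpt
    rw [PiLp.norm_eq_ciSup]
    simpa [Real.norm_eq_abs] using
      le_ciSup (f := fun i => |w i|) (Set.Finite.bddAbove (Set.finite_range _)) k
  · have ht : 0 < p.toReal := ENNReal.toReal_pos (zero_lt_one.trans_le hp).ne' hpt
    rw [PiLp.norm_eq_sum ht]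
    have h1 : |w k| ^ p.toReal ≤ ∑ i, ‖w i‖ ^ p.toReal := by
      refine le_trans (le_of_eq (by simp [Real.norm_eq_abs]))
        (Finset.single_le_sum (f := fun i => ‖w i‖ ^ p.toReal) ?_ (Finset.mem_univ k))
      intro i _
      exact Real.rpow_nonneg (norm_nonneg _) _
    have h2 := Real.rpow_le_rpow (Real.rpow_nonneg (abs_nonneg _) _) h1
      (le_of_lt (by positivity : (0:ℝ) < 1 / p.toReal))
    calc |w k| = (|w k| ^ p.toReal) ^ (1 / p.toReal) := by
          rw [← Real.rpow_mul (abs_nonneg _), mul_one_div, div_self ht.ne', Real.rpow_one]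
      _ ≤ _ := h2

lemma dmin_pos {n : ℕ} (hn : 2 ≤ n) (v : Fin n → ℂ) (hv : Function.Injective v)
    (i : Fin n) : 0 < dmin v i := by
  haveI : Nontrivial (Fin n) :=
    ⟨⟨⟨0, by omega⟩, ⟨1, by omega⟩, by simp [Fin.ext_iff]⟩⟩
  obtain ⟨j, hj⟩ := exists_ne i
  haveI : Nonempty {j : Fin n // j ≠ i} := ⟨⟨j, hj⟩⟩
  obtain ⟨j₀, hj₀⟩ := Finite.exists_min (fun j : {j : Fin n // j ≠ i} =>
    ‖v i - v j.1‖)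
  have heq : dmin v i = ‖v i - v j₀.1‖ :=
    le_antisymm (ciInf_le (Finite.bddBelow_range _) j₀) (le_ciInf hj₀)
  rw [heq]
  exact norm_pos_iff.mpr (sub_ne_zero.mpr (fun h => j₀.2 (hv h.symm)))

lemma dmin_le {n : ℕ} (v : Fin n → ℂ) (i j : Fin n) (hij : j ≠ i) :
    dmin v i ≤ ‖v i - v j‖ := by
  rw [dmin]
  exact ciInf_le (f := fun j : {j : Fin n // j ≠ i} => ‖v i - v j.1‖)
    (Set.Finite.bddBelow (Set.finite_range _)) ⟨j, hij⟩

theorem u_v_xi_alpha_inequality (n : ℕ) (hn : 2 ≤ n) (u v ξ : Fin n → ℂ)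
    (α : ℝ) (hα : 0 ≤ α) (hv : Function.Injective v) (p : ℝ≥0∞) (hp : 1 ≤ p)
    (hu : ∀ i, ‖u i - ξ i‖ ≤ α * ‖v i - ξ i‖) :
    ∀ i j : Fin n, i ≠ j →
      (1 - (1 + α) * pnorm p (fun k => ‖v k - ξ k‖ / dmin v k))
          * ‖v i - v j‖
        ≤ ‖u j - v i‖ := by
  intro i j hij
  set N := pnorm p (fun k => ‖v k - ξ k‖ / dmin v k) with hN
  have hNnonneg : 0 ≤ N := by haveI : Fact (1 ≤ p) := ⟨hp⟩; rw [hN, pnorm]; exact norm_nonneg _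
  have hd : 0 < dmin v j := dmin_pos hn v hv j
  -- coordinate bound
  have hcoord : ‖v j - ξ j‖ / dmin v j ≤ N := by
    have := coord_le_pnorm p hp (fun k => ‖v k - ξ k‖ / dmin v k) j
    rwa [abs_of_nonneg (by positivity)] at this
  have h1 : ‖v j - ξ j‖ ≤ N * dmin v j := by
    rw [div_le_iff₀ hd] at hcoord
    linarith
  have hdle : dmin v j ≤ ‖v i - v j‖ := by
    have := dmin_le v j i hij
    rwa [norm_sub_rev] at this
  -- |u j - v j| ≤ (1+α) |v j - ξ j|
  have h2 : ‖u j - v j‖ ≤ (1 + α) * ‖v j - ξ j‖ := by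
    have h3 : ‖u j - v j‖ ≤ ‖u j - ξ j‖ + ‖ξ j - v j‖ := by
      simpa using norm_add_le (u j - ξ j) (ξ j - v j)
    have h4 : ‖ξ j - v j‖ = ‖v j - ξ j‖ := norm_sub_rev _ _
    have := hu j
    linarith
  -- triangle
  have h5 : ‖v i - v j‖ ≤ ‖u j - v i‖ + ‖u j - v j‖ := by
    have := norm_add_le (v i - u j) (u j - v j)
    simp only [sub_add_sub_cancel] at this
    rwa [show ‖v i - u j‖ = ‖u j - v i‖ from
      norm_sub_rev _ _] at this
  have h6 : ‖u j - v j‖ ≤ (1 + α) * N * ‖v i - v j‖ := by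
    calc ‖u j - v j‖ ≤ (1 + α) * ‖v j - ξ j‖ := h2
      _ ≤ (1 + α) * (N * dmin v j) := by
          apply mul_le_mul_of_nonneg_left h1 (by linarith)
      _ ≤ (1 + α) * N * ‖v i - v j‖ := by
          rw [mul_assoc]
          apply mul_le_mul_of_nonneg_left _ (by linarith)
          exact mul_le_mul_of_nonneg_left hdle hNnonneg
  nlinarith [h5, h6]
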